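/- For any finite symmetric two-player game (X, π) with relative payoff game (X, Δ), imitation is subject to a money pump if and only if there exists an imitation cycle in (X, Δ). -/

import Mathlib

/-- The imitator's action sequence: `y₀` initially; imitate the opponent's previous
action iff it earned a strictly positive relative payoff. -/
noncomputable def imitSeq {X : Type*} (Δ : X → X → ℝ) (x : ℕ → X) (y0 : X) : ℕ → X
  | 0 => y0
  | t + 1 => if 0 < Δ (x t) (imitSeq Δ x y0 t) then x t else imitSeq Δ x y0 t

/-- Imitation is subject to a money pump. -/
def MoneyPump {X : Type*} (Δ : X → X → ℝ) : Prop :=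
  ∀ M : ℝ, ∃ (y0 : X) (x : ℕ → X) (T : ℕ),
    M < ∑ t ∈ Finset.range (T + 1), Δ (x t) (imitSeq Δ x y0 t)

/-- An imitation cycle: a non-constant finite cyclic path of profiles along which the
first player always gets strictly positive relative payoff and the second player
imitates the first player's previous action. -/
def ImitationCycle {X : Type*} (Δ : X → X → ℝ) : Prop :=
  ∃ (n : ℕ) (x y : ℕ → X), 1 ≤ n ∧ (x n, y n) = (x 0, y 0) ∧
    (∃ t < n, (x t, y t) ≠ (x (t + 1), y (t + 1))) ∧
    ∀ t < n, 0 < Δ (x t) (y t) ∧ y (t + 1) = x t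

lemma imitSeq_succ {X : Type*} (Δ : X → X → ℝ) (x : ℕ → X) (y0 : X) (t : ℕ) :
    imitSeq Δ x y0 (t + 1) =
      if 0 < Δ (x t) (imitSeq Δ x y0 t) then x t else imitSeq Δ x y0 t := rfl

lemma imitSeq_const {X : Type*} (Δ : X → X → ℝ) (x : ℕ → X) (y0 : X) {a b : ℕ}
    (hab : a ≤ b)
    (h : ∀ u, a ≤ u → u < b → ¬ 0 < Δ (x u) (imitSeq Δ x y0 u)) :
    imitSeq Δ x y0 b = imitSeq Δ x y0 a := by
  induction b, hab using Nat.le_induction with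
  | base => rfl
  | succ b hb ih =>
    rw [imitSeq_succ, if_neg (h b hb (Nat.lt_succ_self b)),
      ih (fun u hu hub => h u hu (by omega))]

theorem stmt1 {X : Type*} [Fintype X] [Nonempty X] (π : X → X → ℝ)
    (Δ : X → X → ℝ) (hΔ : ∀ x y, Δ x y = π x y - π y x) :
    MoneyPump Δ ↔ ImitationCycle Δ := by
  have hskew : ∀ a : X, Δ a a = 0 := fun a => by rw [hΔ]; ring
  constructor
  · -- MoneyPump → ImitationCycle
    intro hmp
    by_contra hnc
    have hne : (Finset.univ : Finset (X × X)).Nonempty := Finset.univ_nonempty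
    set B : ℝ := Finset.univ.sup' hne (fun p : X × X => Δ p.1 p.2) with hBdef
    set B0 : ℝ := max B 0 with hB0
    have hB0nonneg : 0 ≤ B0 := le_max_right _ _
    have hle : ∀ a b : X, Δ a b ≤ B0 := fun a b =>
      le_trans (Finset.le_sup' (fun p : X × X => Δ p.1 p.2) (Finset.mem_univ (a, b)))
        (le_max_left _ _)
    obtain ⟨y0, x, T, hT⟩ := hmp ((Fintype.card (X × X) : ℝ) * B0)
    set f : ℕ → ℝ := fun t => Δ (x t) (imitSeq Δ x y0 t) with hf
    set S : Finset ℕ := (Finset.range (T + 1)).filter (fun t => 0 < f t) with hS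
    set m := S.card with hm
    set e : Fin m ↪o ℕ := S.orderEmbOfFin rfl with he
    have hmemS : ∀ i : Fin m, e i ∈ S := fun i => S.orderEmbOfFin_mem rfl i
    have hSprop : ∀ t ∈ S, 0 < f t ∧ t < T + 1 := by
      intro t ht
      rw [hS, Finset.mem_filter, Finset.mem_range] at ht
      exact ⟨ht.2, ht.1⟩
    -- consecutive elements of S: the imitator's action at the later time
    -- equals the opponent's action at the earlier time
    have hcons : ∀ i j : Fin m, (j : ℕ) = (i : ℕ) + 1 →
        imitSeq Δ x y0 (e j) = x (e i) := by
      intro i j hij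
      have huv : e i < e j := e.strictMono (by rw [Fin.lt_def, hij]; omega)
      have hipos : 0 < f (e i) := (hSprop _ (hmemS i)).1
      have h1step : imitSeq Δ x y0 (e i + 1) = x (e i) := by
        rw [imitSeq_succ, if_pos hipos]
      have hconst : imitSeq Δ x y0 (e j) = imitSeq Δ x y0 (e i + 1) := by
        apply imitSeq_const Δ x y0 (by omega)
        intro w hw hwv hpos
        have hwS : w ∈ S := by
          rw [hS, Finset.mem_filter, Finset.mem_range]
          have := (hSprop _ (hmemS j)).2
          exact ⟨by omega, hpos⟩
        obtain ⟨l, hl⟩ : ∃ l : Fin m, e l = w := by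
          have hr := S.range_orderEmbOfFin (rfl : S.card = m)
          have : w ∈ Set.range (S.orderEmbOfFin (rfl : S.card = m)) := by
            rw [hr]; exact Finset.mem_coe.mpr hwS
          obtain ⟨l, hl⟩ := this
          exact ⟨l, hl⟩
        have h1 : i < l := by
          have : e i < e l := by rw [hl]; omega
          exact e.lt_iff_lt.mp this
        have h2 : l < j := by
          have : e l < e j := by rw [hl]; omega
          exact e.lt_iff_lt.mp this
        rw [Fin.lt_def] at h1 h2
        omega
      rw [hconst, h1step]
    -- the profile map on positive times is injective, else there is a cycle
    have hinj : Function.Injective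
        (fun i : Fin m => (x (e i), imitSeq Δ x y0 (e i))) := by
      by_contra hninj
      obtain ⟨i, j, hij, hne'⟩ := Function.not_injective_iff.mp hninj
      apply hnc
      have key : ∀ a b : Fin m, a < b →
          (x (e a), imitSeq Δ x y0 (e a)) = (x (e b), imitSeq Δ x y0 (e b)) →
          ImitationCycle Δ := by
        intro a b hab hq
        have hab' : (a : ℕ) < (b : ℕ) := hab
        set n := (b : ℕ) - (a : ℕ) with hn
        have hbm : (b : ℕ) < m := b.isLt
        have idx : ∀ k : ℕ, min ((a : ℕ) + k) (b : ℕ) < m := fun k =>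
          lt_of_le_of_lt (min_le_right _ _) hbm
        set cidx : ℕ → Fin m := fun k => ⟨min ((a : ℕ) + k) (b : ℕ), idx k⟩ with hcidx
        have h0 : cidx 0 = a :=
          Fin.ext (by show ((a : ℕ) + 0) ⊓ (b : ℕ) = (a : ℕ); omega)
        have hnn : cidx n = b :=
          Fin.ext (by show ((a : ℕ) + n) ⊓ (b : ℕ) = (b : ℕ); omega)
        have hkv : ∀ k, k ≤ n → (cidx k : ℕ) = (a : ℕ) + k := by
          intro k hk
          show ((a : ℕ) + k) ⊓ (b : ℕ) = (a : ℕ) + k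
          omega
        have hstep : ∀ k, k < n →
            imitSeq Δ x y0 (e (cidx (k + 1))) = x (e (cidx k)) := by
          intro k hk
          apply hcons
          rw [hkv _ (by omega), hkv _ (by omega)]
          omega
        refine ⟨n, fun k => x (e (cidx k)), fun k => imitSeq Δ x y0 (e (cidx k)),
          by omega, ?_, ?_, ?_⟩
        · simp only [hnn, h0]; exact hq.symm
        · refine ⟨0, by omega, ?_⟩
          intro hcon
          dsimp only at hcon
          rw [Prod.mk.injEq] at hcon
          have hy1 : imitSeq Δ x y0 (e (cidx 1)) = x (e (cidx 0)) :=
            hstep 0 (by omega)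
          have heq : imitSeq Δ x y0 (e (cidx 0)) = x (e (cidx 0)) := by
            rw [hcon.2, hy1]
          have hpos0 : 0 < f (e (cidx 0)) := (hSprop _ (hmemS _)).1
          rw [hf] at hpos0
          simp only [heq] at hpos0
          rw [hskew] at hpos0
          exact lt_irrefl _ hpos0
        · intro t ht
          refine ⟨(hSprop _ (hmemS _)).1, hstep t ht⟩
      rcases lt_or_gt_of_ne hne' with h | h
      · exact key i j h hij
      · exact key j i h hij.symm
    have hcard : m ≤ Fintype.card (X × X) := by
      have h := Fintype.card_le_of_injective _ hinj
      simpa using h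
    have hsum1 : ∑ t ∈ Finset.range (T + 1), f t ≤ ∑ t ∈ S, f t := by
      calc ∑ t ∈ Finset.range (T + 1), f t
          ≤ ∑ t ∈ Finset.range (T + 1), (if 0 < f t then f t else 0) := by
            apply Finset.sum_le_sum
            intro t _
            split
            · exact le_refl _
            · exact le_of_not_gt ‹¬ 0 < f t›
        _ = ∑ t ∈ S, f t := (Finset.sum_filter _ _).symm
    have hsum2 : ∑ t ∈ S, f t ≤ (m : ℝ) * B0 := by
      have h := Finset.sum_le_card_nsmul S f B0 (fun t _ => hle _ _)
      simpa [nsmul_eq_mul, hm] using h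
    have hfin : ∑ t ∈ Finset.range (T + 1), f t ≤ (Fintype.card (X × X) : ℝ) * B0 :=
      le_trans (le_trans hsum1 hsum2)
        (mul_le_mul_of_nonneg_right (Nat.cast_le.mpr hcard) hB0nonneg)
    exact absurd hT (not_lt.mpr hfin)
  · -- ImitationCycle → MoneyPump
    rintro ⟨n, cx, cy, hn, hcyc, -, hpos⟩ M
    rw [Prod.mk.injEq] at hcyc
    set s : ℝ := ∑ t ∈ Finset.range n, Δ (cx t) (cy t) with hs
    have hspos : 0 < s := by
      apply Finset.sum_pos
      · intro t ht
        exact (hpos t (Finset.mem_range.mp ht)).1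
      · exact ⟨0, Finset.mem_range.mpr (by omega)⟩
    set xs : ℕ → X := fun t => cx (t % n) with hxs
    have himit : ∀ t, imitSeq Δ xs (cy 0) t = cy (t % n) := by
      intro t
      induction t with
      | zero => simp [imitSeq]
      | succ t ih =>
        have htn : t % n < n := Nat.mod_lt _ (by omega)
        have hxst : xs t = cx (t % n) := rfl
        rw [imitSeq_succ, ih, hxst, if_pos (hpos _ htn).1]
        have hy := (hpos (t % n) htn).2
        have hdm : t / n * n + t % n = t := Nat.div_add_mod' t n
        have hmod1 : (t + 1) % n = (t % n + 1) % n := by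
          conv_lhs => rw [show t + 1 = t / n * n + (t % n + 1) by omega]
          rw [Nat.mul_add_mod']
        rcases Nat.lt_or_ge (t % n + 1) n with h | h
        · rw [hmod1, Nat.mod_eq_of_lt h, hy]
        · have hteq : t % n + 1 = n := by omega
          rw [hmod1, hteq, Nat.mod_self]
          rw [hteq] at hy
          rw [← hy]
          exact hcyc.2
    have hsums : ∀ k : ℕ,
        ∑ t ∈ Finset.range (k * n), Δ (xs t) (imitSeq Δ xs (cy 0) t) = (k : ℝ) * s := by
      intro k
      induction k with
      | zero => simp
      | succ k ih =>
        have hkn : (k + 1) * n = k * n + n := by ring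
        rw [hkn, Finset.sum_range_add, ih]
        have : ∑ j ∈ Finset.range n, Δ (xs (k * n + j)) (imitSeq Δ xs (cy 0) (k * n + j))
            = s := by
          rw [hs]
          apply Finset.sum_congr rfl
          intro j hj
          have hjn : j < n := Finset.mem_range.mp hj
          have hmod : (k * n + j) % n = j := by
            rw [Nat.mul_add_mod']
            exact Nat.mod_eq_of_lt hjn
          rw [himit, hmod]; simp only [hxs, hmod]
        rw [this]
        push_cast
        ring
    obtain ⟨k, hk⟩ := exists_nat_gt (M / s)
    have hkn1 : 1 ≤ (k + 1) * n := Nat.mul_pos (by omega) (by omega)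
    refine ⟨cy 0, xs, (k + 1) * n - 1, ?_⟩
    rw [Nat.sub_add_cancel hkn1, hsums (k + 1)]
    have hM : M < (k : ℝ) * s := (div_lt_iff₀ hspos).mp hk
    have : (k : ℝ) * s ≤ ((k : ℕ) + 1 : ℝ) * s := by nlinarith
    push_cast
    linarith
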